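/- For real numbers q and x with |q| < 1, the series sum over r ≥ 1 of q^r cos(r x)/r converges to -(1/2) log(1 - 2 q cos x + q^2). -/

import Mathlib

theorem cos_series_log (q x : ℝ) (hq : |q| < 1) :
    HasSum (fun r : ℕ => q ^ (r + 1) * Real.cos ((r + 1) * x) / (r + 1))
      (-(1 / 2) * Real.log (1 - 2 * q * Real.cos x + q ^ 2)) := by
  set z : ℂ := q * Complex.exp (x * Complex.I) with hz
  have hnz : ‖z‖ < 1 := by
    rw [hz]
    simp [map_mul, Complex.norm_exp]
    simpa using hq
  have h := Complex.hasSum_taylorSeries_neg_log hnz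
  have hre := Complex.hasSum_re h
  have hterm : ∀ n : ℕ, (z ^ n / n).re = q ^ n * Real.cos (n * x) / n := by
    intro n
    have : z ^ n = (q ^ n : ℝ) * Complex.exp ((n * x : ℝ) * Complex.I) := by
      rw [hz, mul_pow, ← Complex.exp_nat_mul]
      push_cast
      ring_nf
    rw [this]
    simp [Complex.div_re, Complex.normSq, Complex.exp_re, Complex.exp_im,
      Complex.mul_re, Complex.mul_im]
    rcases Nat.eq_zero_or_pos n with h0 | h0
    · simp [h0]
    · field_simp
      simp only [← Complex.ofReal_pow, Complex.ofReal_re, Complex.ofReal_im]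
      ring
  have hcos : q * Real.cos x ≤ |q| := by
    calc q * Real.cos x ≤ |q * Real.cos x| := le_abs_self _
    _ = |q| * |Real.cos x| := abs_mul _ _
    _ ≤ |q| * 1 := by
        exact mul_le_mul_of_nonneg_left (Real.abs_cos_le_one x) (abs_nonneg q)
    _ = |q| := mul_one _
  have hsum : (-Complex.log (1 - z)).re
      = -(1 / 2) * Real.log (1 - 2 * q * Real.cos x + q ^ 2) := by
    have habs : Complex.normSq (1 - z) = 1 - 2 * q * Real.cos x + q ^ 2 := by
      simp [Complex.normSq_apply, hz, Complex.sub_re, Complex.sub_im,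
        Complex.mul_re, Complex.mul_im, Complex.exp_re, Complex.exp_im]
      linear_combination q ^ 2 * Real.sin_sq_add_cos_sq x
    have h1 : (1 : ℂ) - z ≠ 0 := by
      intro h
      have : Complex.normSq (1 - z) = 0 := by rw [h]; simp
      rw [habs] at this
      nlinarith [sq_abs q, abs_nonneg q]
    rw [Complex.neg_re, Complex.log_re, Complex.norm_def, Real.log_sqrt (Complex.normSq_nonneg _), habs]
    ring
  rw [funext hterm, hsum] at hre
  have hshift := (hasSum_nat_add_iff' (f := fun n : ℕ => q ^ n * Real.cos (n * x) / n) 1).mpr hre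
  simp only [Finset.range_one, Finset.sum_singleton, Nat.cast_zero, zero_mul,
    pow_zero, one_mul, div_zero, sub_zero] at hshift
  convert hshift using 2 with r
  push_cast
  · rfl
  · push_cast
    ring_nf
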